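/- Let n ≥ 3 and let p, q be integers with 2 ≤ p < q ≤ n. Let i_p, i_q be integers with 1 ≤ i_p < p and 1 ≤ i_q < q, and suppose i_p ≤ q - i_q ≤ p. Then in S_n the following exchange law holds: t_q^{i_q} · t_p^{i_p} = t_{i_q}^{p+i_q-q} · t_{i_q+i_p}^{q-p} · t_q^{i_q+i_p}. -/
import Mathlib


/- We work in the symmetric group on `Fin n` (representing `{1, ..., n}` via `i ↦ i - 1`).
The paper multiplies permutations left-to-right: `(π₁ · π₂)(i) = π₂(π₁(i))`,
while Mathlib's `*` on `Equiv.Perm` is function composition: `(π₁ * π₂)(i) = π₁(π₂(i))`.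
Hence a paper product `A · B · C` is rendered below as `C * B * A`. -/

/-- `sP n i` is the transposition `sᵢ = (i, i+1)` (1-indexed), for `1 ≤ i ≤ n - 1`. -/
def sP (n i : ℕ) : Equiv.Perm (Fin n) :=
  if h : 1 ≤ i ∧ i < n then
    Equiv.swap ⟨i - 1, lt_of_le_of_lt (Nat.sub_le i 1) h.2⟩ ⟨i, h.2⟩
  else 1

/-- `tP n m` is `t_m = s₁ · s₂ ⋯ s_{m-1}` (paper's left-to-right product, so here the
factor for larger index is multiplied on the left).  `tP n 0 = tP n 1 = 1`. -/
def tP (n m : ℕ) : Equiv.Perm (Fin n) :=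
  (List.range (m - 1)).foldl (fun g j => sP n (j + 1) * g) 1

/-- `uP n r` is `u_{2r} = t_{2r-2} · s_{2r-1}` (paper order; here reversed). -/
def uP (n r : ℕ) : Equiv.Perm (Fin n) := sP n (2 * r - 1) * tP n (2 * r - 2)

/-- `vP n r` is `v_{2r} = t_{2r}²`. -/
def vP (n r : ℕ) : Equiv.Perm (Fin n) := (tP n (2 * r)) ^ 2

lemma sP_apply (n i : ℕ) (h1 : 1 ≤ i) (h2 : i < n) (x : Fin n) :
    ((sP n i) x).val = if x.val = i - 1 then i else if x.val = i then i - 1 else x.val := by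
  rw [sP, dif_pos ⟨h1, h2⟩, Equiv.swap_apply_def]
  simp only [Fin.ext_iff]
  split_ifs <;> simp_all

lemma tP_succ (n m : ℕ) (hm : 1 ≤ m) : tP n (m + 1) = sP n m * tP n m := by
  unfold tP
  have h : m + 1 - 1 = (m - 1) + 1 := by omega
  have h2 : m - 1 + 1 = m := by omega
  rw [h, List.range_succ, List.foldl_append]
  simp only [List.foldl_cons, List.foldl_nil, h2]

lemma tP_apply (n m : ℕ) (hm : m ≤ n) (x : Fin n) :
    ((tP n m) x).val =
      if x.val < m then (if x.val = 0 then m - 1 else x.val - 1) else x.val := by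
  induction m with
  | zero =>
    rw [show tP n 0 = 1 from rfl, Equiv.Perm.one_apply]
    split_ifs <;> omega
  | succ m ih =>
    rcases Nat.eq_zero_or_pos m with h0 | h0
    · subst h0
      rw [show tP n 1 = 1 from rfl, Equiv.Perm.one_apply]
      split_ifs <;> omega
    · rw [tP_succ n m h0, Equiv.Perm.mul_apply,
        sP_apply n m h0 (by omega), ih (by omega)]
      split_ifs <;> omega

lemma tP_pow_apply (n m k : ℕ) (hm : m ≤ n) (hk : k ≤ m) (x : Fin n) :
    ((tP n m ^ k) x).val =
      if x.val < m then (if x.val < k then x.val + m - k else x.val - k) else x.val := by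
  induction k with
  | zero =>
    rw [pow_zero, Equiv.Perm.one_apply]
    split_ifs <;> omega
  | succ k ih =>
    rw [pow_succ', Equiv.Perm.mul_apply, tP_apply n m hm, ih (by omega)]
    split_ifs <;> omega

set_option maxHeartbeats 2000000 in
/-- exchange law, case `i_p ≤ q - i_q ≤ p`:
`t_q^{i_q} · t_p^{i_p} = t_{i_q}^{p+i_q-q} · t_{i_q+i_p}^{q-p} · t_q^{i_q+i_p}` (paper order;
rendered here in composition order, i.e. reversed). -/
theorem exchange_law_case2 (n p q ip iq : ℕ) (hn : 3 ≤ n)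
    (hp : 2 ≤ p) (hpq : p < q) (hq : q ≤ n)
    (hip1 : 1 ≤ ip) (hip2 : ip < p) (hiq1 : 1 ≤ iq) (hiq2 : iq < q)
    (h1 : ip ≤ q - iq) (h2 : q - iq ≤ p) :
    tP n p ^ ip * tP n q ^ iq =
      tP n q ^ (iq + ip) * tP n (iq + ip) ^ (q - p) * tP n iq ^ (p + iq - q) := by
  apply Equiv.ext
  intro x
  rw [Fin.ext_iff]
  simp only [Equiv.Perm.mul_apply]
  have A : ((tP n q ^ iq) x).val =
      if x.val < q then (if x.val < iq then x.val + q - iq else x.val - iq) else x.val :=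
    tP_pow_apply n q iq hq (by omega) x
  have B := tP_pow_apply n p ip (by omega) (by omega) ((tP n q ^ iq) x)
  rw [A] at B
  have C : ((tP n iq ^ (p + iq - q)) x).val =
      if x.val < iq then (if x.val < p + iq - q then x.val + iq - (p + iq - q)
        else x.val - (p + iq - q)) else x.val :=
    tP_pow_apply n iq (p + iq - q) (by omega) (by omega) x
  have D := tP_pow_apply n (iq + ip) (q - p) (by omega) (by omega)
    ((tP n iq ^ (p + iq - q)) x)
  rw [C] at D
  have E := tP_pow_apply n q (iq + ip) hq (by omega)
    ((tP n (iq + ip) ^ (q - p)) ((tP n iq ^ (p + iq - q)) x))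
  rw [D] at E
  rw [B, E]
  split_ifs <;> omega
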